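/- With φ as above (L ≥ 5), the vector E₁₂^{(1)}φ is not a linear combination of the vectors E₂₁^{(l)}φ, l = 2,…,L. -/

import Mathlib

open Matrix BigOperators

/-- Operator acting as the 2×2 matrix `A` on the `l`-th qubit and as identity elsewhere. -/
noncomputable def tensorFactorOp (L : ℕ) (A : Matrix (Fin 2) (Fin 2) ℂ) (l : Fin L) :
    Matrix (Fin L → Fin 2) (Fin L → Fin 2) ℂ :=
  fun s t => A (s l) (t l) * (if ∀ m, m ≠ l → s m = t m then 1 else 0)

/-- The lowering matrix `E₂₁ = [[0,0],[1,0]]`. -/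
def E21 : Matrix (Fin 2) (Fin 2) ℂ := Matrix.of ![![0, 0], ![1, 0]]

/-- Basis state with qubits `1` and `l` excited and all others in the ground state. -/
def uPat (L : ℕ) [NeZero L] (l : Fin L) : Fin L → Fin 2 :=
  fun m => if m = 0 ∨ m = l then 1 else 0

/-- The stable state
`φ = (|0…0⟩+|1…1⟩) + Σ_{l=2}^{L} (|1 0…0 1_l 0…0⟩ + |0 1…1 0_l 1…1⟩)`. -/
noncomputable def stablePhi (L : ℕ) [NeZero L] : (Fin L → Fin 2) → ℂ :=
  fun s => (if s = (fun _ => 0) then 1 else 0) + (if s = (fun _ => 1) then 1 else 0)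
    + ∑ l ∈ Finset.univ.erase 0,
        ((if s = uPat L l then 1 else 0)
          + (if s = (fun m => 1 - uPat L l m) then 1 else 0))

/-- The raising matrix `E₁₂ = [[0,1],[0,0]]`. -/
def E12 : Matrix (Fin 2) (Fin 2) ℂ := Matrix.of ![![0, 1], ![0, 0]]

lemma tensor_mulVec {L : ℕ} (A : Matrix (Fin 2) (Fin 2) ℂ) (l : Fin L)
    (v : (Fin L → Fin 2) → ℂ) (s : Fin L → Fin 2) :
    (tensorFactorOp L A l).mulVec v s
      = ∑ b : Fin 2, A (s l) b * v (Function.update s l b) := by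
  classical
  have hinj : ∀ a ∈ (Finset.univ : Finset (Fin 2)), ∀ b ∈ Finset.univ,
      Function.update s l a = Function.update s l b → a = b := by
    intro a _ b _ hab
    have := congrFun hab l
    simpa using this
  have h0 : ∀ t ∈ (Finset.univ : Finset (Fin L → Fin 2)),
      t ∉ Finset.univ.image (Function.update s l) →
      tensorFactorOp L A l s t * v t = 0 := by
    intro t _ ht
    have hc : ¬ (∀ m, m ≠ l → s m = t m) := by
      intro hc
      apply ht
      refine Finset.mem_image.2 ⟨t l, Finset.mem_univ _, ?_⟩
      funext m
      by_cases hm : m = l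
      · subst hm; simp
      · simp [Function.update, hm, hc m hm]
    simp [tensorFactorOp, hc]
  calc (tensorFactorOp L A l).mulVec v s
      = ∑ t : Fin L → Fin 2, tensorFactorOp L A l s t * v t := rfl
    _ = ∑ t ∈ Finset.univ.image (Function.update s l),
          tensorFactorOp L A l s t * v t :=
        (Finset.sum_subset (Finset.subset_univ _) h0).symm
    _ = ∑ b : Fin 2, tensorFactorOp L A l s (Function.update s l b)
          * v (Function.update s l b) := Finset.sum_image hinj
    _ = ∑ b : Fin 2, A (s l) b * v (Function.update s l b) := by
        apply Finset.sum_congr rfl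
        intro b _
        have : (∀ m, m ≠ l → s m = Function.update s l b m) := by
          intro m hm; simp [Function.update, hm]
        simp only [tensorFactorOp, if_pos this, Function.update_self, mul_one]

lemma exists_third {L : ℕ} [NeZero L] (hL : 5 ≤ L) (l : Fin L) : ∃ m : Fin L, m ≠ 0 ∧ m ≠ l := by
  by_cases h : l = ⟨1, by omega⟩
  · refine ⟨⟨2, by omega⟩, ?_, ?_⟩
    · simp [Fin.ext_iff, Fin.val_zero]
    · simp [h, Fin.ext_iff]
  · refine ⟨⟨1, by omega⟩, ?_, fun he => h he.symm⟩
    simp [Fin.ext_iff, Fin.val_zero]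

section
variable {L : ℕ} [NeZero L] (hL : 5 ≤ L)
include hL

lemma phi_zero : stablePhi L (fun _ => 0) = 1 := by
  unfold stablePhi
  have h1 : (fun _ : Fin L => (0:Fin 2)) ≠ (fun _ => 1) := by
    intro h; exact absurd (congrFun h 0) (by decide)
  rw [if_pos rfl, if_neg h1]
  have hsum : ∀ l ∈ Finset.univ.erase (0 : Fin L),
      ((if (fun _ : Fin L => (0:Fin 2)) = uPat L l then (1:ℂ) else 0)
        + (if (fun _ : Fin L => (0:Fin 2)) = (fun m => 1 - uPat L l m) then 1 else 0)) = 0 := by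
    intro l hl
    have hl0 : l ≠ 0 := Finset.ne_of_mem_erase hl
    obtain ⟨m, hm0, hml⟩ := exists_third hL l
    have h2 : (fun _ : Fin L => (0:Fin 2)) ≠ uPat L l := by
      intro h
      have := congrFun h 0
      simp [uPat] at this
    have h3 : (fun _ : Fin L => (0:Fin 2)) ≠ (fun m => 1 - uPat L l m) := by
      intro h
      have := congrFun h m
      simp [uPat, hm0, hml] at this
    rw [if_neg h2, if_neg h3, add_zero]
  rw [Finset.sum_eq_zero hsum]
  ring

lemma phi_one : stablePhi L (fun _ => 1) = 1 := by
  unfold stablePhi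
  have h1 : (fun _ : Fin L => (1:Fin 2)) ≠ (fun _ => 0) := by
    intro h; exact absurd (congrFun h 0) (by decide)
  rw [if_neg h1, if_pos rfl]
  have hsum : ∀ l ∈ Finset.univ.erase (0 : Fin L),
      ((if (fun _ : Fin L => (1:Fin 2)) = uPat L l then (1:ℂ) else 0)
        + (if (fun _ : Fin L => (1:Fin 2)) = (fun m => 1 - uPat L l m) then 1 else 0)) = 0 := by
    intro l hl
    obtain ⟨m, hm0, hml⟩ := exists_third hL l
    have h2 : (fun _ : Fin L => (1:Fin 2)) ≠ uPat L l := by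
      intro h
      have := congrFun h m
      simp [uPat, hm0, hml] at this
    have h3 : (fun _ : Fin L => (1:Fin 2)) ≠ (fun m => 1 - uPat L l m) := by
      intro h
      have := congrFun h 0
      simp [uPat] at this
    rw [if_neg h2, if_neg h3, add_zero]
  rw [Finset.sum_eq_zero hsum]
  ring

lemma phi_uPat (l : Fin L) (hl : l ≠ 0) : stablePhi L (uPat L l) = 1 := by
  unfold stablePhi
  obtain ⟨m, hm0, hml⟩ := exists_third hL l
  have h1 : uPat L l ≠ (fun _ => 0) := by
    intro h; have := congrFun h 0; simp [uPat] at this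
  have h2 : uPat L l ≠ (fun _ => 1) := by
    intro h; have := congrFun h m; simp [uPat, hm0, hml] at this
  rw [if_neg h1, if_neg h2]
  rw [Finset.sum_eq_single l]
  · have h3 : uPat L l ≠ (fun m => 1 - uPat L l m) := by
      intro h; have := congrFun h 0; simp [uPat] at this
    rw [if_pos rfl, if_neg h3]; ring
  · intro k hk hkl
    have hk0 : k ≠ 0 := Finset.ne_of_mem_erase hk
    have h3 : uPat L l ≠ uPat L k := by
      intro h; have := congrFun h l
      simp [uPat, hl, Ne.symm hkl] at this
    have h4 : uPat L l ≠ (fun m => 1 - uPat L k m) := by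
      intro h; have := congrFun h 0; simp [uPat] at this
    rw [if_neg h3, if_neg h4, add_zero]
  · intro h
    exact absurd (Finset.mem_erase.2 ⟨hl, Finset.mem_univ l⟩) h

lemma phi_w (k : Fin L) (hk : k ≠ 0) : stablePhi L (fun m => 1 - uPat L k m) = 1 := by
  unfold stablePhi
  obtain ⟨m, hm0, hmk⟩ := exists_third hL k
  have h1 : (fun m => 1 - uPat L k m) ≠ (fun _ : Fin L => (0:Fin 2)) := by
    intro h; have := congrFun h m; simp [uPat, hm0, hmk] at this
  have h2 : (fun m => 1 - uPat L k m) ≠ (fun _ : Fin L => (1:Fin 2)) := by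
    intro h; have := congrFun h 0; simp [uPat] at this
  rw [if_neg h1, if_neg h2]
  rw [Finset.sum_eq_single k]
  · have h3 : (fun m => 1 - uPat L k m) ≠ uPat L k := by
      intro h; have := congrFun h 0; simp [uPat] at this
    rw [if_neg h3, if_pos rfl]; ring
  · intro l hl hlk
    have hl0 : l ≠ 0 := Finset.ne_of_mem_erase hl
    have h3 : (fun m => 1 - uPat L k m) ≠ uPat L l := by
      intro h; have := congrFun h 0; simp [uPat] at this
    have h4 : (fun m => 1 - uPat L k m) ≠ (fun m => 1 - uPat L l m) := by
      intro h; have := congrFun h l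
      rw [show uPat L k l = 0 by simp [uPat, hl0, hlk],
        show uPat L l l = 1 by simp [uPat]] at this
      exact absurd this (by decide)
    rw [if_neg h3, if_neg h4, add_zero]
  · intro h
    exact absurd (Finset.mem_erase.2 ⟨hk, Finset.mem_univ k⟩) h

end

/-- For `L ≥ 5` the vector `E₁₂^{(1)}φ` is not a linear combination of the vectors
`E₂₁^{(l)}φ`, `l = 2,…,L`. -/
theorem stmt12 (L : ℕ) [NeZero L] (hL : 5 ≤ L) :
    ∀ c : Fin L → ℂ,
      (tensorFactorOp L E12 0).mulVec (stablePhi L) ≠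
        ∑ l ∈ Finset.univ.erase 0,
          c l • (tensorFactorOp L E21 l).mulVec (stablePhi L) := by
  intro c h
  have hE12_00 : E12 0 0 = 0 := by norm_num [E12]
  have hE12_01 : E12 0 1 = 1 := by norm_num [E12]
  have hE21_10 : E21 1 0 = 1 := by norm_num [E21]
  have hE21_11 : E21 1 1 = 0 := by norm_num [E21]
  have hE21_0 : ∀ b, E21 0 b = 0 := by
    intro b; fin_cases b <;> norm_num [E21]
  have hpt : ∀ s, (tensorFactorOp L E12 0).mulVec (stablePhi L) s
      = ∑ k ∈ Finset.univ.erase 0,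
          c k * ((tensorFactorOp L E21 k).mulVec (stablePhi L) s) := by
    intro s
    have := congrFun h s
    simpa [Finset.sum_apply, Pi.smul_apply, smul_eq_mul] using this
  -- Step A: c l = 1 for every l ≠ 0
  have hc : ∀ l : Fin L, l ≠ 0 → c l = 1 := by
    intro l hl
    set s := Function.update (uPat L l) 0 0 with hsdef
    have hs0 : s 0 = 0 := Function.update_self _ _ _
    have hsl : s l = 1 := by
      rw [hsdef, Function.update_of_ne hl]; simp [uPat]
    have hup1 : Function.update s 0 1 = uPat L l := by
      funext m
      by_cases hm : m = 0
      · subst hm; simp [Function.update_self, uPat]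
      · rw [Function.update_of_ne hm, hsdef, Function.update_of_ne hm]
    have hupl0 : Function.update s l 0 = (fun _ => (0:Fin 2)) := by
      funext m
      by_cases hm : m = l
      · subst hm; simp
      · rw [Function.update_of_ne hm]
        by_cases hm0 : m = 0
        · subst hm0; exact hs0
        · rw [hsdef, Function.update_of_ne hm0]; simp [uPat, hm0, hm]
    have hs2 := hpt s
    rw [tensor_mulVec, Fin.sum_univ_two, hs0, hE12_00, hE12_01, hup1,
      phi_uPat hL l hl] at hs2
    have hrhs : ∑ k ∈ Finset.univ.erase 0,
        c k * ((tensorFactorOp L E21 k).mulVec (stablePhi L) s) = c l := by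
      rw [Finset.sum_eq_single l]
      · rw [tensor_mulVec, Fin.sum_univ_two, hsl, hE21_10, hE21_11, hupl0,
          phi_zero hL]; ring
      · intro k hk hkl
        have hk0 : k ≠ 0 := Finset.ne_of_mem_erase hk
        have hsk : s k = 0 := by
          rw [hsdef, Function.update_of_ne hk0]; simp [uPat, hk0, hkl]
        rw [tensor_mulVec, Fin.sum_univ_two, hsk, hE21_0, hE21_0]; ring
      · intro habs
        exact absurd (Finset.mem_erase.2 ⟨hl, Finset.mem_univ l⟩) habs
    rw [hrhs] at hs2
    simpa using hs2.symm
  -- Step B: evaluate at the point (0,1,1,…,1)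
  set s := Function.update (fun _ : Fin L => (1:Fin 2)) 0 0 with hsdef
  have hs0 : s 0 = 0 := Function.update_self _ _ _
  have hup1 : Function.update s 0 1 = (fun _ => (1:Fin 2)) := by
    funext m
    by_cases hm : m = 0
    · subst hm; simp
    · rw [Function.update_of_ne hm, hsdef, Function.update_of_ne hm]
  have hs2 := hpt s
  rw [tensor_mulVec, Fin.sum_univ_two, hs0, hE12_00, hE12_01, hup1,
    phi_one hL] at hs2
  have hterm : ∀ k ∈ Finset.univ.erase (0:Fin L),
      c k * ((tensorFactorOp L E21 k).mulVec (stablePhi L) s) = 1 := by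
    intro k hk
    have hk0 : k ≠ 0 := Finset.ne_of_mem_erase hk
    have hsk : s k = 1 := by rw [hsdef, Function.update_of_ne hk0]
    have hupk : Function.update s k 0 = (fun m => 1 - uPat L k m) := by
      funext m
      by_cases hm : m = k
      · subst hm; simp [uPat]
      · rw [Function.update_of_ne hm]
        by_cases hm0 : m = 0
        · subst hm0; rw [hs0]; simp [uPat]
        · rw [hsdef, Function.update_of_ne hm0]; simp [uPat, hm0, hm]
    rw [tensor_mulVec, Fin.sum_univ_two, hsk, hE21_10, hE21_11, hupk,
      phi_w hL k hk0, hc k hk0]; ring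
  rw [Finset.sum_congr rfl hterm, Finset.sum_const, nsmul_eq_mul, mul_one] at hs2
  have hcard : (Finset.univ.erase (0:Fin L)).card = L - 1 := by
    rw [Finset.card_erase_of_mem (Finset.mem_univ _), Finset.card_univ,
      Fintype.card_fin]
  rw [hcard] at hs2
  simp only [zero_mul, zero_add, mul_one] at hs2
  have : (1:ℕ) = L - 1 := by exact_mod_cast hs2
  omega
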